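/- arXiv:2410.13701 — 3 statements merged into one kernel-verified Lean document; each statement's English description precedes it below -/
import Mathlib

section
/- Let H be a Hilbert space and T_j (j ∈ ℕ) bounded operators on H such that ‖T_j T_ℓ^*‖ ≤ C·2^{-|j-ℓ|} and ‖T_j^* T_ℓ‖ ≤ C·2^{-|j-ℓ|} for all j, ℓ. Then for any finitely supported scalar sequence α with |α_j| ≤ 1, the norm of ∑_j α_j T_j is bounded by a constant depending only on C (independently of the support of α). -/
open Finset in
lemma ckstein_sum_piFinset_succ {M ι : Type*} [AddCommMonoid M] [DecidableEq ι]
    (t : Finset ι) (n : ℕ) (h : (Fin (n+1) → ι) → M) :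
    ∑ g ∈ Fintype.piFinset (fun _ : Fin (n+1) => t), h g
      = ∑ p ∈ t, ∑ g ∈ Fintype.piFinset (fun _ : Fin n => t), h (Fin.cons p g) := by
  rw [← Finset.sum_product']
  refine Finset.sum_nbij' (fun g => (g 0, Fin.tail g)) (fun q => Fin.cons q.1 q.2) ?_ ?_ ?_ ?_ ?_
  · intro g hg
    simp only [Fintype.mem_piFinset] at hg
    simp only [Finset.mem_product, Fintype.mem_piFinset]
    exact ⟨hg 0, fun i => hg _⟩
  · intro q hq
    simp only [Finset.mem_product, Fintype.mem_piFinset] at hq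
    simp only [Fintype.mem_piFinset]
    intro i
    refine Fin.cases ?_ ?_ i
    · simpa using hq.1
    · intro j; simpa using hq.2 j
  · intro g _; simp [Fin.cons_self_tail]
  · intro q _; simp
  · intro g _; simp [Fin.cons_self_tail]

lemma ckstein_sum_pow_ofFn {R ι : Type*} [Semiring R] [DecidableEq ι]
    (t : Finset ι) (f : ι → R) (n : ℕ) :
    (∑ p ∈ t, f p) ^ n
      = ∑ g ∈ Fintype.piFinset (fun _ : Fin n => t), (List.ofFn (fun i => f (g i))).prod := by
  induction n with
  | zero =>
      rw [pow_zero, Fintype.piFinset_of_isEmpty, Fintype.sum_unique]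
      simp
  | succ n ih =>
      rw [pow_succ', ih, Finset.sum_mul_sum, ckstein_sum_piFinset_succ]
      refine Finset.sum_congr rfl fun p _ => Finset.sum_congr rfl fun g _ => ?_
      simp [List.ofFn_succ]

noncomputable def cksteinCr (C : ℝ) : ℕ → List (ℕ × ℕ) → ℝ
  | _, [] => 1
  | ℓ, p :: L => C * (2:ℝ) ^ (-|(ℓ:ℝ) - (p.1:ℝ)|) * cksteinCr C p.2 L

noncomputable def cksteinW (C : ℝ) : ℕ → List (ℕ × ℕ) → ℝ
  | _, [] => 1
  | ℓ, p :: L => C * (2:ℝ) ^ (-|(ℓ:ℝ) - (p.1:ℝ)| / 2) * (2:ℝ) ^ (-|(p.1:ℝ) - (p.2:ℝ)| / 2)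
      * cksteinW C p.2 L

noncomputable def cksteinPa (C : ℝ) (L : List (ℕ × ℕ)) : ℝ :=
  (L.map fun q => C * (2:ℝ) ^ (-|(q.1:ℝ) - (q.2:ℝ)|)).prod

lemma cksteinPa_nil (C : ℝ) : cksteinPa C [] = 1 := rfl
lemma cksteinPa_cons (C : ℝ) (q L) :
    cksteinPa C (q :: L) = C * (2:ℝ) ^ (-|(q.1:ℝ) - (q.2:ℝ)|) * cksteinPa C L := rfl

lemma cksteinCr_nonneg {C : ℝ} (hC : 0 ≤ C) : ∀ ℓ L, 0 ≤ cksteinCr C ℓ L := by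
  intro ℓ L
  induction L generalizing ℓ with
  | nil => norm_num [cksteinCr]
  | cons p L ih =>
      exact mul_nonneg (mul_nonneg hC (Real.rpow_nonneg (by norm_num) _)) (ih p.2)

lemma cksteinW_nonneg {C : ℝ} (hC : 0 ≤ C) : ∀ ℓ L, 0 ≤ cksteinW C ℓ L := by
  intro ℓ L
  induction L generalizing ℓ with
  | nil => norm_num [cksteinW]
  | cons p L ih =>
      exact mul_nonneg (mul_nonneg (mul_nonneg hC (Real.rpow_nonneg (by norm_num) _))
        (Real.rpow_nonneg (by norm_num) _)) (ih p.2)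

lemma cksteinPa_nonneg {C : ℝ} (hC : 0 ≤ C) : ∀ L, 0 ≤ cksteinPa C L := by
  intro L
  induction L with
  | nil => norm_num [cksteinPa_nil]
  | cons q L ih =>
      rw [cksteinPa_cons]
      exact mul_nonneg (mul_nonneg hC (Real.rpow_nonneg (by norm_num) _)) ih

lemma ckstein_sqrt_rpow (d : ℝ) : Real.sqrt ((2:ℝ) ^ (-d)) = (2:ℝ) ^ (-d / 2) := by
  rw [Real.sqrt_eq_rpow, ← Real.rpow_mul (by norm_num : (0:ℝ) ≤ 2)]
  ring_nf

lemma ckstein_sqrt_id {C : ℝ} (hC : 0 ≤ C) :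
    ∀ L ℓ, Real.sqrt (cksteinPa C L * cksteinCr C ℓ L) = cksteinW C ℓ L := by
  intro L
  induction L with
  | nil => simp [cksteinPa_nil, cksteinCr, cksteinW]
  | cons q L ih =>
      intro ℓ
      rw [cksteinPa_cons]
      show Real.sqrt (C * (2:ℝ) ^ (-|(q.1:ℝ) - (q.2:ℝ)|) * cksteinPa C L *
        (C * (2:ℝ) ^ (-|(ℓ:ℝ) - (q.1:ℝ)|) * cksteinCr C q.2 L)) = _
      have h2 : (0:ℝ) ≤ (2:ℝ) ^ (-|(q.1:ℝ) - (q.2:ℝ)|) := Real.rpow_nonneg (by norm_num) _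
      have h3 : (0:ℝ) ≤ (2:ℝ) ^ (-|(ℓ:ℝ) - (q.1:ℝ)|) := Real.rpow_nonneg (by norm_num) _
      have e : C * (2:ℝ) ^ (-|(q.1:ℝ) - (q.2:ℝ)|) * cksteinPa C L *
          (C * (2:ℝ) ^ (-|(ℓ:ℝ) - (q.1:ℝ)|) * cksteinCr C q.2 L)
          = (C * C) * ((2:ℝ) ^ (-|(ℓ:ℝ) - (q.1:ℝ)|) * (2:ℝ) ^ (-|(q.1:ℝ) - (q.2:ℝ)|)) *
            (cksteinPa C L * cksteinCr C q.2 L) := by ring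
      rw [e, Real.sqrt_mul (by positivity), Real.sqrt_mul (by positivity),
        Real.sqrt_mul_self hC, Real.sqrt_mul h3, ckstein_sqrt_rpow, ckstein_sqrt_rpow, ih q.2]
      show _ = C * (2:ℝ) ^ (-|(ℓ:ℝ) - (q.1:ℝ)| / 2) * (2:ℝ) ^ (-|(q.1:ℝ) - (q.2:ℝ)| / 2)
        * cksteinW C q.2 L
      ring

lemma ckstein_summable : Summable (fun k : ℤ => (2:ℝ) ^ (-(|k| : ℝ) / 2)) := by
  have hgeom : Summable (fun n : ℕ => ((2:ℝ) ^ (-(1:ℝ)/2)) ^ n) := by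
    apply summable_geometric_of_lt_one (Real.rpow_nonneg (by norm_num) _)
    exact Real.rpow_lt_one_of_one_lt_of_neg (by norm_num) (by norm_num)
  have hnat : ∀ n : ℕ, (2:ℝ) ^ (-(n:ℝ)/2) = ((2:ℝ) ^ (-(1:ℝ)/2)) ^ n := by
    intro n
    rw [← Real.rpow_natCast ((2:ℝ) ^ (-(1:ℝ)/2)) n, ← Real.rpow_mul (by norm_num : (0:ℝ) ≤ 2)]
    ring_nf
  apply Summable.of_nat_of_neg
  · refine hgeom.congr fun n => ?_
    rw [← hnat n]
    norm_num
  · refine hgeom.congr fun n => ?_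
    rw [← hnat n]
    norm_num

lemma ckstein_S0_ge_one : 1 ≤ ∑' k : ℤ, (2:ℝ) ^ (-(|k| : ℝ) / 2) := by
  have := Summable.le_tsum ckstein_summable 0 (fun k _ => Real.rpow_nonneg (by norm_num) _)
  simpa using this

lemma ckstein_key (s : Finset ℕ) (a : ℕ) :
    ∑ j ∈ s, (2:ℝ) ^ (-|(a:ℝ) - (j:ℝ)| / 2) ≤ ∑' k : ℤ, (2:ℝ) ^ (-(|k| : ℝ) / 2) := by
  have hinj : Function.Injective (fun j : ℕ => (j : ℤ) - a) := by
    intro x y h; simpa using h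
  have : ∑ j ∈ s, (2:ℝ) ^ (-|(a:ℝ) - (j:ℝ)| / 2)
      = ∑ k ∈ s.image (fun j : ℕ => (j : ℤ) - a), (2:ℝ) ^ (-(|k| : ℝ) / 2) := by
    rw [Finset.sum_image (fun x _ y _ h => hinj h)]
    refine Finset.sum_congr rfl fun j _ => ?_
    congr 1
    push_cast
    rw [abs_sub_comm]
  rw [this]
  exact Summable.sum_le_tsum _ (fun k _ => Real.rpow_nonneg (by norm_num) _) ckstein_summable

lemma ckstein_sumW {C S : ℝ} (hC : 0 ≤ C) (hS : 0 ≤ S) (s : Finset ℕ)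
    (hkey : ∀ a : ℕ, ∑ j ∈ s, (2:ℝ) ^ (-|(a:ℝ) - (j:ℝ)| / 2) ≤ S) :
    ∀ (n : ℕ) (ℓ0 : ℕ),
      ∑ g ∈ Fintype.piFinset (fun _ : Fin n => s ×ˢ s),
          cksteinW C ℓ0 (List.ofFn fun i => g i)
        ≤ (C * S * S) ^ n := by
  intro n
  induction n with
  | zero =>
      intro ℓ0
      rw [Fintype.piFinset_of_isEmpty, Fintype.sum_unique]
      simp [cksteinW]
  | succ n ih =>
      intro ℓ0
      rw [ckstein_sum_piFinset_succ]
      have hK : (0:ℝ) ≤ (C * S * S) ^ n := by positivity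
      have step1 : ∀ p ∈ s ×ˢ s,
          ∑ g ∈ Fintype.piFinset (fun _ : Fin n => s ×ˢ s),
              cksteinW C ℓ0 (List.ofFn (Fin.cons p g : Fin (n+1) → ℕ × ℕ))
            ≤ C * (2:ℝ) ^ (-|(ℓ0:ℝ) - (p.1:ℝ)| / 2) * (2:ℝ) ^ (-|(p.1:ℝ) - (p.2:ℝ)| / 2)
              * (C * S * S) ^ n := by
        intro p _
        have hrw : ∀ g : Fin n → ℕ × ℕ,
            cksteinW C ℓ0 (List.ofFn (Fin.cons p g : Fin (n+1) → ℕ × ℕ))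
              = C * (2:ℝ) ^ (-|(ℓ0:ℝ) - (p.1:ℝ)| / 2) * (2:ℝ) ^ (-|(p.1:ℝ) - (p.2:ℝ)| / 2)
                * cksteinW C p.2 (List.ofFn fun i => g i) := by
          intro g
          rw [List.ofFn_succ]
          simp only [Fin.cons_zero, Fin.cons_succ]
          rfl
        rw [Finset.sum_congr rfl fun g _ => hrw g, ← Finset.mul_sum]
        exact mul_le_mul_of_nonneg_left (ih p.2) (by positivity)
      calc ∑ p ∈ s ×ˢ s, ∑ g ∈ Fintype.piFinset (fun _ : Fin n => s ×ˢ s),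
              cksteinW C ℓ0 (List.ofFn (Fin.cons p g : Fin (n+1) → ℕ × ℕ))
          ≤ ∑ p ∈ s ×ˢ s, C * (2:ℝ) ^ (-|(ℓ0:ℝ) - (p.1:ℝ)| / 2)
              * (2:ℝ) ^ (-|(p.1:ℝ) - (p.2:ℝ)| / 2) * (C * S * S) ^ n :=
            Finset.sum_le_sum step1
        _ = ∑ j ∈ s, (C * (2:ℝ) ^ (-|(ℓ0:ℝ) - (j:ℝ)| / 2) * (C * S * S) ^ n)
              * ∑ ℓ ∈ s, (2:ℝ) ^ (-|(j:ℝ) - (ℓ:ℝ)| / 2) := by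
            rw [Finset.sum_product]
            refine Finset.sum_congr rfl fun j _ => ?_
            rw [Finset.mul_sum]
            exact Finset.sum_congr rfl fun ℓ _ => by ring
        _ ≤ ∑ j ∈ s, (C * (2:ℝ) ^ (-|(ℓ0:ℝ) - (j:ℝ)| / 2) * (C * S * S) ^ n) * S := by
            refine Finset.sum_le_sum fun j _ => ?_
            exact mul_le_mul_of_nonneg_left (hkey j) (by positivity)
        _ = (C * (C * S * S) ^ n * S) * ∑ j ∈ s, (2:ℝ) ^ (-|(ℓ0:ℝ) - (j:ℝ)| / 2) := by
            rw [Finset.mul_sum]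
            exact Finset.sum_congr rfl fun j _ => by ring
        _ ≤ (C * (C * S * S) ^ n * S) * S :=
            mul_le_mul_of_nonneg_left (hkey ℓ0) (by positivity)
        _ = (C * S * S) ^ (n + 1) := by ring

theorem stmt6 {H : Type} [NormedAddCommGroup H] [InnerProductSpace ℂ H] [CompleteSpace H]
    (T : ℕ → H →L[ℂ] H) (C : ℝ) (hC : 0 ≤ C)
    (h1 : ∀ j ℓ : ℕ, ‖(T j).comp (ContinuousLinearMap.adjoint (T ℓ))‖
        ≤ C * (2:ℝ) ^ (-|(j:ℝ) - (ℓ:ℝ)|))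
    (h2 : ∀ j ℓ : ℕ, ‖(ContinuousLinearMap.adjoint (T j)).comp (T ℓ)‖
        ≤ C * (2:ℝ) ^ (-|(j:ℝ) - (ℓ:ℝ)|))
    (s : Finset ℕ) (α : ℕ → ℂ) (hα : ∀ j, ‖α j‖ ≤ 1) :
    ‖∑ j ∈ s, α j • T j‖ ≤ Real.sqrt C * ∑' k : ℤ, (2:ℝ) ^ (-(|k| : ℝ) / 2) := by
  classical
  set S0 : ℝ := ∑' k : ℤ, (2:ℝ) ^ (-(|k| : ℝ) / 2) with hS0def
  have hS0one : 1 ≤ S0 := ckstein_S0_ge_one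
  have hS0pos : 0 < S0 := lt_of_lt_of_le one_pos hS0one
  have h1' : ∀ j ℓ : ℕ, ‖T j * star (T ℓ)‖ ≤ C * (2:ℝ) ^ (-|(j:ℝ) - (ℓ:ℝ)|) := by
    intro j ℓ
    rw [ContinuousLinearMap.mul_def, ContinuousLinearMap.star_eq_adjoint]
    exact h1 j ℓ
  have h2' : ∀ j ℓ : ℕ, ‖star (T j) * T ℓ‖ ≤ C * (2:ℝ) ^ (-|(j:ℝ) - (ℓ:ℝ)|) := by
    intro j ℓ
    rw [ContinuousLinearMap.mul_def, ContinuousLinearMap.star_eq_adjoint]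
    exact h2 j ℓ
  have hTsq : ∀ j, ‖T j‖ * ‖T j‖ ≤ C := by
    intro j
    have := h1' j j
    simp only [sub_self, abs_zero, neg_zero, Real.rpow_zero, mul_one] at this
    rwa [CStarRing.norm_self_mul_star] at this
  have hT : ∀ j, ‖T j‖ ≤ Real.sqrt C := by
    intro j
    have h := Real.sqrt_le_sqrt (hTsq j)
    rwa [Real.sqrt_mul_self (norm_nonneg _)] at h
  rcases eq_or_lt_of_le hC with hC0 | hCpos
  · -- C = 0 : every T j vanishes
    have hT0 : ∀ j, T j = 0 := by
      intro j
      have := hTsq j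
      rw [← hC0] at this
      have hnn : ‖T j‖ = 0 := by nlinarith [norm_nonneg (T j)]
      exact norm_eq_zero.mp hnn
    have : (∑ j ∈ s, α j • T j) = 0 := by
      refine Finset.sum_eq_zero fun j _ => by rw [hT0 j, smul_zero]
    rw [this, norm_zero]
    positivity
  -- main case 0 < C
  set Sop : H →L[ℂ] H := ∑ j ∈ s, α j • T j with hSop
  set A : H →L[ℂ] H := Sop * star Sop with hA
  have hA_sa : IsSelfAdjoint A := by
    rw [IsSelfAdjoint, hA, star_mul, star_star]
  have hA_norm : ‖A‖ = ‖Sop‖ * ‖Sop‖ := CStarRing.norm_self_mul_star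
  set op : ℕ × ℕ → (H →L[ℂ] H) :=
    fun p => (α p.1 * (starRingEnd ℂ) (α p.2)) • (T p.1 * star (T p.2)) with hop
  have hA_expand : A = ∑ p ∈ s ×ˢ s, op p := by
    rw [hA, hSop, star_sum, Finset.sum_mul_sum, Finset.sum_product]
    refine Finset.sum_congr rfl fun j _ => Finset.sum_congr rfl fun ℓ _ => ?_
    rw [star_smul, hop]
    simp only [RCLike.star_def]
    rw [smul_mul_assoc, mul_smul_comm, smul_smul]
  have hcoef : ∀ p : ℕ × ℕ, ‖α p.1 * (starRingEnd ℂ) (α p.2)‖ ≤ 1 := by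
    intro p
    rw [norm_mul, RCLike.norm_conj]
    exact mul_le_one₀ (hα _) (norm_nonneg _) (hα _)
  have hop_norm : ∀ p : ℕ × ℕ, ‖op p‖ ≤ C * (2:ℝ) ^ (-|(p.1:ℝ) - (p.2:ℝ)|) := by
    intro p
    rw [hop]
    calc ‖(α p.1 * (starRingEnd ℂ) (α p.2)) • (T p.1 * star (T p.2))‖
        = ‖α p.1 * (starRingEnd ℂ) (α p.2)‖ * ‖T p.1 * star (T p.2)‖ := norm_smul _ _
      _ ≤ 1 * (C * (2:ℝ) ^ (-|(p.1:ℝ) - (p.2:ℝ)|)) :=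
          mul_le_mul (hcoef p) (h1' p.1 p.2) (norm_nonneg _) zero_le_one
      _ = C * (2:ℝ) ^ (-|(p.1:ℝ) - (p.2:ℝ)|) := one_mul _
  -- bound (a) : product of pairwise norms
  have normA : ∀ L : List (ℕ × ℕ), ‖(L.map op).prod‖ ≤ cksteinPa C L := by
    intro L
    induction L with
    | nil =>
        simp only [List.map_nil, List.prod_nil, cksteinPa_nil]; exact ContinuousLinearMap.norm_id_le (𝕜 := ℂ) (E := H)
    | cons p L ih =>
        rw [List.map_cons, List.prod_cons, cksteinPa_cons]
        calc ‖op p * (L.map op).prod‖ ≤ ‖op p‖ * ‖(L.map op).prod‖ := norm_mul_le _ _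
          _ ≤ (C * (2:ℝ) ^ (-|(p.1:ℝ) - (p.2:ℝ)|)) * cksteinPa C L :=
              mul_le_mul (hop_norm p) ih (norm_nonneg _)
                (mul_nonneg hC (Real.rpow_nonneg (by norm_num) _))
  -- bound (b) : cross grouping
  have normB : ∀ (L : List (ℕ × ℕ)) (ℓ : ℕ),
      ‖star (T ℓ) * (L.map op).prod‖ ≤ Real.sqrt C * cksteinCr C ℓ L := by
    intro L
    induction L with
    | nil =>
        intro ℓ
        simp only [List.map_nil, List.prod_nil, mul_one]
        rw [norm_star]
        simpa [cksteinCr] using hT ℓ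
    | cons p L ih =>
        intro ℓ
        have hre : star (T ℓ) * ((p :: L).map op).prod
            = (α p.1 * (starRingEnd ℂ) (α p.2)) •
              ((star (T ℓ) * T p.1) * (star (T p.2) * (L.map op).prod)) := by
          rw [List.map_cons, List.prod_cons, hop]
          simp only [smul_mul_assoc, mul_smul_comm, mul_assoc]
        rw [hre]
        calc ‖(α p.1 * (starRingEnd ℂ) (α p.2)) •
              ((star (T ℓ) * T p.1) * (star (T p.2) * (L.map op).prod))‖
            = ‖α p.1 * (starRingEnd ℂ) (α p.2)‖ *
              ‖(star (T ℓ) * T p.1) * (star (T p.2) * (L.map op).prod)‖ := norm_smul _ _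
          _ ≤ 1 * ‖(star (T ℓ) * T p.1) * (star (T p.2) * (L.map op).prod)‖ :=
              mul_le_mul_of_nonneg_right (hcoef p) (norm_nonneg _)
          _ = ‖(star (T ℓ) * T p.1) * (star (T p.2) * (L.map op).prod)‖ := one_mul _
          _ ≤ ‖star (T ℓ) * T p.1‖ * ‖star (T p.2) * (L.map op).prod‖ := norm_mul_le _ _
          _ ≤ (C * (2:ℝ) ^ (-|(ℓ:ℝ) - (p.1:ℝ)|)) * (Real.sqrt C * cksteinCr C p.2 L) :=
              mul_le_mul (h2' ℓ p.1) (ih p.2) (norm_nonneg _) (by positivity)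
          _ = Real.sqrt C * (C * (2:ℝ) ^ (-|(ℓ:ℝ) - (p.1:ℝ)|) * cksteinCr C p.2 L) := by ring
          _ = Real.sqrt C * cksteinCr C ℓ (p :: L) := rfl
  -- per-chain geometric-mean bound
  have normChain : ∀ (p : ℕ × ℕ) (L : List (ℕ × ℕ)),
      ‖((p :: L).map op).prod‖
        ≤ C * (2:ℝ) ^ (-|(p.1:ℝ) - (p.2:ℝ)| / 2) * cksteinW C p.2 L := by
    intro p L
    set x := ‖((p :: L).map op).prod‖ with hx
    have hb1 : x ≤ (C * (2:ℝ) ^ (-|(p.1:ℝ) - (p.2:ℝ)|)) * cksteinPa C L := by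
      have := normA (p :: L)
      rwa [cksteinPa_cons] at this
    have hb2 : x ≤ Real.sqrt C * (Real.sqrt C * cksteinCr C p.2 L) := by
      have hre : ((p :: L).map op).prod
          = (α p.1 * (starRingEnd ℂ) (α p.2)) •
            (T p.1 * (star (T p.2) * (L.map op).prod)) := by
        rw [List.map_cons, List.prod_cons, hop, smul_mul_assoc, mul_assoc]
      rw [hx, hre]
      calc ‖(α p.1 * (starRingEnd ℂ) (α p.2)) •
            (T p.1 * (star (T p.2) * (L.map op).prod))‖
          = ‖α p.1 * (starRingEnd ℂ) (α p.2)‖ *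
            ‖T p.1 * (star (T p.2) * (L.map op).prod)‖ := norm_smul _ _
        _ ≤ 1 * ‖T p.1 * (star (T p.2) * (L.map op).prod)‖ :=
            mul_le_mul_of_nonneg_right (hcoef p) (norm_nonneg _)
        _ = ‖T p.1 * (star (T p.2) * (L.map op).prod)‖ := one_mul _
        _ ≤ ‖T p.1‖ * ‖star (T p.2) * (L.map op).prod‖ := norm_mul_le _ _
        _ ≤ Real.sqrt C * (Real.sqrt C * cksteinCr C p.2 L) :=
            mul_le_mul (hT p.1) (normB L p.2) (norm_nonneg _) (Real.sqrt_nonneg _)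
    have hx0 : 0 ≤ x := norm_nonneg _
    have hs2 : Real.sqrt C * (Real.sqrt C * cksteinCr C p.2 L) = C * cksteinCr C p.2 L := by
      rw [← mul_assoc, Real.mul_self_sqrt hC]
    rw [hs2] at hb2
    have key : x ≤ Real.sqrt ((C * (2:ℝ) ^ (-|(p.1:ℝ) - (p.2:ℝ)|) * cksteinPa C L)
        * (C * cksteinCr C p.2 L)) := by
      have : x = Real.sqrt (x * x) := (Real.sqrt_mul_self hx0).symm
      rw [this]
      exact Real.sqrt_le_sqrt (mul_le_mul hb1 hb2 hx0
        (mul_nonneg (mul_nonneg hC (Real.rpow_nonneg (by norm_num) _))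
          (cksteinPa_nonneg hC L)))
    refine key.trans_eq ?_
    have hrearr : C * (2:ℝ) ^ (-|(p.1:ℝ) - (p.2:ℝ)|) * cksteinPa C L
        * (C * cksteinCr C p.2 L)
        = (C * C * (2:ℝ) ^ (-|(p.1:ℝ) - (p.2:ℝ)|)) * (cksteinPa C L * cksteinCr C p.2 L) := by
      ring
    rw [hrearr, Real.sqrt_mul (by positivity), Real.sqrt_mul (by positivity),
      Real.sqrt_mul_self hC, ckstein_sqrt_rpow, ckstein_sqrt_id hC]
  -- key: partial geometric sums dominated by S0
  have hkey : ∀ a : ℕ, ∑ j ∈ s, (2:ℝ) ^ (-|(a:ℝ) - (j:ℝ)| / 2) ≤ S0 :=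
    fun a => ckstein_key s a
  -- main power bound
  have hmain : ∀ n : ℕ, ‖A ^ (n+1)‖ ≤ (s.card : ℝ) * (C * S0 * S0) ^ (n+1) := by
    intro n
    rw [hA_expand, ckstein_sum_pow_ofFn]
    calc ‖∑ g ∈ Fintype.piFinset (fun _ : Fin (n+1) => s ×ˢ s),
            (List.ofFn fun i => op (g i)).prod‖
        ≤ ∑ g ∈ Fintype.piFinset (fun _ : Fin (n+1) => s ×ˢ s),
            ‖(List.ofFn fun i => op (g i)).prod‖ := norm_sum_le _ _
      _ ≤ ∑ g ∈ Fintype.piFinset (fun _ : Fin (n+1) => s ×ˢ s),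
            C * (2:ℝ) ^ (-|((g 0).1:ℝ) - ((g 0).2:ℝ)| / 2)
              * cksteinW C (g 0).2 (List.ofFn fun i => g i.succ) := by
          refine Finset.sum_le_sum fun g _ => ?_
          have hform : (List.ofFn fun i => op (g i))
              = ((g 0 :: List.ofFn fun i => g i.succ).map op) := by
            rw [List.ofFn_succ, List.map_cons, List.map_ofFn]
            rfl
          rw [hform]
          exact normChain (g 0) (List.ofFn fun i => g i.succ)
      _ = ∑ p ∈ s ×ˢ s, ∑ g ∈ Fintype.piFinset (fun _ : Fin n => s ×ˢ s),
            C * (2:ℝ) ^ (-|(p.1:ℝ) - (p.2:ℝ)| / 2)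
              * cksteinW C p.2 (List.ofFn fun i => g i) := by
          rw [ckstein_sum_piFinset_succ]
          refine Finset.sum_congr rfl fun p _ => Finset.sum_congr rfl fun g _ => ?_
          simp only [Fin.cons_zero, Fin.cons_succ]
      _ ≤ ∑ p ∈ s ×ˢ s, C * (2:ℝ) ^ (-|(p.1:ℝ) - (p.2:ℝ)| / 2) * (C * S0 * S0) ^ n := by
          refine Finset.sum_le_sum fun p _ => ?_
          rw [← Finset.mul_sum]
          exact mul_le_mul_of_nonneg_left
            (ckstein_sumW hC (le_of_lt hS0pos) s hkey n p.2) (by positivity)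
      _ = ∑ j ∈ s, (C * (C * S0 * S0) ^ n) * ∑ ℓ ∈ s, (2:ℝ) ^ (-|(j:ℝ) - (ℓ:ℝ)| / 2) := by
          rw [Finset.sum_product]
          refine Finset.sum_congr rfl fun j _ => ?_
          rw [Finset.mul_sum]
          exact Finset.sum_congr rfl fun ℓ _ => by ring
      _ ≤ ∑ j ∈ s, (C * (C * S0 * S0) ^ n) * S0 := by
          refine Finset.sum_le_sum fun j _ => ?_
          exact mul_le_mul_of_nonneg_left (hkey j) (by positivity)
      _ = (s.card : ℝ) * (C * (C * S0 * S0) ^ n * S0) := by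
          rw [Finset.sum_const, nsmul_eq_mul]
      _ ≤ (s.card : ℝ) * (C * S0 * S0) ^ (n+1) := by
          refine mul_le_mul_of_nonneg_left ?_ (Nat.cast_nonneg _)
          have : C * (C * S0 * S0) ^ n * S0 * 1 ≤ C * (C * S0 * S0) ^ n * S0 * S0 := by
            refine mul_le_mul_of_nonneg_left hS0one (by positivity)
          calc C * (C * S0 * S0) ^ n * S0 = C * (C * S0 * S0) ^ n * S0 * 1 := by ring
            _ ≤ C * (C * S0 * S0) ^ n * S0 * S0 := this
            _ = (C * S0 * S0) ^ (n+1) := by ring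
  -- convert to bounds on ‖Sop‖ ^ (2 * 2 ^ m)
  have hpow : ∀ m : ℕ, ‖Sop‖ ^ (2 * 2 ^ m) ≤ (s.card : ℝ) * (C * S0 * S0) ^ (2 ^ m) := by
    intro m
    have hnn : ‖A ^ (2 ^ m)‖₊ = ‖A‖₊ ^ (2 ^ m) := hA_sa.nnnorm_pow_two_pow m
    have hn : ‖A ^ (2 ^ m)‖ = ‖A‖ ^ (2 ^ m) := by
      have := congrArg (fun x : NNReal => (x : ℝ)) hnn
      simpa using this
    obtain ⟨n, hn'⟩ : ∃ n : ℕ, 2 ^ m = n + 1 :=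
      ⟨2 ^ m - 1, (Nat.succ_pred_eq_of_pos (by positivity : 0 < 2 ^ m)).symm⟩
    have e1 : ‖Sop‖ ^ (2 * 2 ^ m) = ‖A‖ ^ (2 ^ m) := by
      rw [pow_mul, pow_two, ← hA_norm]
    rw [e1, ← hn, hn']
    exact hmain n
  -- conclude by taking 2n-th roots via a limiting argument
  by_contra hcon
  push_neg at hcon
  set D : ℝ := Real.sqrt C * S0 with hD
  have hDpos : 0 < D := mul_pos (Real.sqrt_pos.mpr hCpos) hS0pos
  have hD2 : D * D = C * S0 * S0 := by
    rw [hD]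
    have : Real.sqrt C * S0 * (Real.sqrt C * S0) = (Real.sqrt C * Real.sqrt C) * (S0 * S0) := by
      ring
    rw [this, Real.mul_self_sqrt hC]
    ring
  set r : ℝ := ‖Sop‖ / D with hr
  have hr1 : 1 < r := (one_lt_div hDpos).mpr hcon
  have hrb : ∀ m : ℕ, r ^ (2 * 2 ^ m) ≤ (s.card : ℝ) := by
    intro m
    have hDk : (0:ℝ) < D ^ (2 * 2 ^ m) := pow_pos hDpos _
    have hDeq : D ^ (2 * 2 ^ m) = (C * S0 * S0) ^ (2 ^ m) := by
      rw [← hD2, ← pow_two, ← pow_mul]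
    rw [hr, div_pow, div_le_iff₀ hDk]
    calc ‖Sop‖ ^ (2 * 2 ^ m) ≤ (s.card : ℝ) * (C * S0 * S0) ^ (2 ^ m) := hpow m
      _ = (s.card : ℝ) * D ^ (2 * 2 ^ m) := by rw [hDeq]
  have htop : Filter.Tendsto (fun m : ℕ => r ^ (2 * 2 ^ m)) Filter.atTop Filter.atTop := by
    have h1t : Filter.Tendsto (fun k : ℕ => r ^ k) Filter.atTop Filter.atTop :=
      tendsto_pow_atTop_atTop_of_one_lt hr1
    have h2t : Filter.Tendsto (fun m : ℕ => 2 * 2 ^ m) Filter.atTop Filter.atTop := by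
      refine Filter.tendsto_atTop_mono (fun m => ?_) Filter.tendsto_id
      calc (m : ℕ) ≤ 2 ^ m := Nat.le_of_lt (Nat.lt_two_pow_self (n := m))
        _ ≤ 2 * 2 ^ m := Nat.le_mul_of_pos_left _ (by norm_num)
    exact h1t.comp h2t
  obtain ⟨m, hm⟩ := (htop.eventually_gt_atTop ((s.card : ℝ))).exists
  exact absurd (hrb m) (not_le.mpr hm)
end

section
/- Let K_j be kernels on a quasi-metric measure space (X,ρ,μ) satisfying: (I) K_j(x,y) = 0 when ρ(x,y) > C₁2^{-j}; (III) there are nonnegative functions I_j with |K_j(x,y) − K_j(x,y₀)| ≤ 2^j ρ(y,y₀) I_j(x,y) whenever ρ(y,y₀) ≤ M 2^{-j}, and sup_y ∫ I_j(x,y)dμ(x) ≤ C₃; and (II*) sup_x ∫ |K_j(y,x)| dμ(y) ≤ C₂. Then for every bounded sequence α and all y ≠ y₀ in X, ∫_{ρ(x,y) > 2C_ρ ρ(y,y₀)} |∑_j α_j (K_j(x,y) − K_j(x,y₀))| dμ(x) ≤ C·sup_j |α_j|, where C depends only on C₁/M, C₂, and C₁·C₃. -/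
open MeasureTheory

set_option maxHeartbeats 1000000 in
theorem stmt9 : ∃ F : ℝ → ℝ → ℝ → ℝ,
    ∀ (X : Type) [MeasurableSpace X], ∀ (μ : Measure X)
      (ρ : X → X → ℝ) (Cρ C₁ C₂ C₃ M : ℝ)
      (K : ℕ → X → X → ℂ) (I : ℕ → X → X → ℝ),
      (∀ x y, 0 ≤ ρ x y) → (∀ x y, ρ x y = ρ y x) →
      1 ≤ Cρ → (∀ x y y₀, ρ x y ≤ Cρ * (ρ x y₀ + ρ y y₀)) →
      Measurable (Function.uncurry ρ) →
      0 < C₁ → 0 < C₂ → 0 < C₃ → 0 < M →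
      (∀ j, Measurable (Function.uncurry (K j))) →
      -- (I): support condition
      (∀ j x y, C₁ * ((2:ℝ) ^ j)⁻¹ < ρ x y → K j x y = 0) →
      -- (III): Lipschitz smoothing condition with majorants I_j
      (∀ j x y, 0 ≤ I j x y) →
      (∀ j x y y₀, ρ y y₀ ≤ M * ((2:ℝ) ^ j)⁻¹ →
        ‖K j x y - K j x y₀‖ ≤ (2:ℝ) ^ j * ρ y y₀ * I j x y) →
      (∀ j y, Integrable (fun x => I j x y) μ) →
      (∀ j y, ∫ x, I j x y ∂μ ≤ C₃) →
      -- (II*): mass condition for the adjoint kernels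
      (∀ j x, Integrable (fun y => K j y x) μ) →
      (∀ j x, ∫ y, ‖K j y x‖ ∂μ ≤ C₂) →
      ∀ (α : ℕ → ℂ) (B : ℝ), (∀ j, ‖α j‖ ≤ B) →
      ∀ y y₀ : X, y ≠ y₀ →
        ∫ x in {x | 2 * Cρ * ρ y y₀ < ρ x y}, ‖∑' j, α j * (K j x y - K j x y₀)‖ ∂μ
          ≤ F (C₁ / M) C₂ (C₁ * C₃) * B := by
  refine ⟨fun a b c => 2 * c / a + 2 * b * (max 0 (Real.logb 2 a) + 1), ?_⟩
  intro X _ μ ρ Cρ C₁ C₂ C₃ M K I hρ0 hρsymm hCρ htri hρmeas hC₁ hC₂ hC₃ hM hKmeas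
    hsupp hI0 hIII hIint hIbd hKint hKbd α B hα y y₀ hyy
  have hB : 0 ≤ B := le_trans (norm_nonneg _) (hα 0)
  have haF : 0 < C₁ / M := div_pos hC₁ hM
  have hF0 : 0 ≤ 2 * (C₁ * C₃) / (C₁ / M) + 2 * C₂ * (max 0 (Real.logb 2 (C₁ / M)) + 1) := by
    have h1 : 0 ≤ 2 * (C₁ * C₃) / (C₁ / M) := by positivity
    have h2 : (0:ℝ) ≤ max 0 (Real.logb 2 (C₁ / M)) + 1 := by
      have := le_max_left (0:ℝ) (Real.logb 2 (C₁ / M)); linarith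
    nlinarith
  set d := ρ y y₀ with hd
  have hd0 : 0 ≤ d := hρ0 y y₀
  rcases eq_or_lt_of_le hd0 with h0 | hdpos
  · -- degenerate case: ρ y y₀ = 0, the kernels at y and y₀ coincide
    have hKeq : ∀ j x, K j x y = K j x y₀ := by
      intro j x
      have h1 : ρ y y₀ ≤ M * ((2:ℝ) ^ j)⁻¹ := by
        rw [← hd, ← h0]; positivity
      have h2 := hIII j x y y₀ h1
      rw [← hd, ← h0] at h2
      simp only [mul_zero, zero_mul] at h2
      have : ‖K j x y - K j x y₀‖ = 0 := le_antisymm h2 (norm_nonneg _)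
      rwa [norm_eq_zero, sub_eq_zero] at this
    have : ∀ x, ‖∑' j, α j * (K j x y - K j x y₀)‖ = 0 := by
      intro x
      have : (fun j => α j * (K j x y - K j x y₀)) = fun _ => 0 := by
        funext j; rw [hKeq j x]; ring
      rw [this, tsum_zero, norm_zero]
    calc ∫ x in {x | 2 * Cρ * ρ y y₀ < ρ x y}, ‖∑' j, α j * (K j x y - K j x y₀)‖ ∂μ
        = ∫ x in {x | 2 * Cρ * ρ y y₀ < ρ x y}, (0:ℝ) ∂μ := by
          apply integral_congr_ae; filter_upwards with x; rw [this x]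
      _ = 0 := integral_zero _ _
      _ ≤ _ := by positivity
  · -- main case: d > 0
    -- choose N minimal with C₁ / d < 2^N
    have hex : ∃ n : ℕ, C₁ / d < 2 ^ n := pow_unbounded_of_one_lt (C₁ / d) one_lt_two
    set N := Nat.find hex with hN
    have hN1 : C₁ / d < 2 ^ N := Nat.find_spec hex
    have hNmin : ∀ j < N, (2:ℝ) ^ j ≤ C₁ / d := by
      intro j hj
      have := Nat.find_min hex hj
      push_neg at this; exact this
    set S : Set X := {x | 2 * Cρ * d < ρ x y} with hS
    have hSmeas : MeasurableSet S := by
      have h1 : Measurable (fun x => ρ x y) := by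
        have : (fun x => ρ x y) = Function.uncurry ρ ∘ (fun x => (x, y)) := rfl
        rw [this]; exact hρmeas.comp (measurable_id.prodMk measurable_const)
      exact measurableSet_lt measurable_const h1
    -- both kernels vanish on S for j ≥ N
    have hvanish : ∀ j, N ≤ j → ∀ x ∈ S, K j x y = 0 ∧ K j x y₀ = 0 := by
      intro j hj x hx
      have hxS : 2 * Cρ * d < ρ x y := hx
      have h2j : (2:ℝ) ^ N ≤ 2 ^ j := pow_le_pow_right₀ one_le_two hj
      have hsmall : C₁ * ((2:ℝ) ^ j)⁻¹ < d := by
        have h1 : C₁ / d < 2 ^ j := lt_of_lt_of_le hN1 h2j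
        have h2 : (0:ℝ) < 2 ^ j := by positivity
        rw [div_lt_iff₀ hdpos] at h1
        rw [mul_inv_lt_iff₀ h2]
        linarith
      have hdle : d ≤ 2 * Cρ * d := by nlinarith
      constructor
      · exact hsupp j x y (by linarith)
      · -- ρ x y₀ > d
        have htr := htri x y y₀
        have hCρ0 : 0 < Cρ := lt_of_lt_of_le zero_lt_one hCρ
        have : d < ρ x y₀ := by
          by_contra hcon
          push_neg at hcon
          have : ρ x y ≤ Cρ * (ρ x y₀ + d) := htr
          nlinarith
        exact hsupp j x y₀ (by linarith)
    set g : ℕ → X → ℂ := fun j x => α j * (K j x y - K j x y₀) with hg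
    have hginteg : ∀ j, Integrable (g j) μ := fun j =>
      (((hKint j y).sub (hKint j y₀)).const_mul (α j))
    set G : X → ℂ := fun x => ∑ j ∈ Finset.range N, g j x with hG
    have hGinteg : Integrable G μ := integrable_finset_sum _ (fun j _ => hginteg j)
    -- on S the tsum equals the finite sum
    have htsum : ∀ x ∈ S, (∑' j, α j * (K j x y - K j x y₀)) = G x := by
      intro x hx
      apply tsum_eq_sum
      intro j hj
      rw [Finset.mem_range, not_lt] at hj
      obtain ⟨h1, h2⟩ := hvanish j hj x hx
      rw [h1, h2]; ring
    -- bound each integral ∫‖K j · y - K j · y₀‖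
    set m : ℕ → ℝ := fun j => if d ≤ M * ((2:ℝ) ^ j)⁻¹ then 2 ^ j * d * C₃ else 2 * C₂
      with hm
    have hDj : ∀ j, ∫ x, ‖K j x y - K j x y₀‖ ∂μ ≤ m j := by
      intro j
      by_cases hc : d ≤ M * ((2:ℝ) ^ j)⁻¹
      · rw [hm]; simp only [if_pos hc]
        have hpt : ∀ x, ‖K j x y - K j x y₀‖ ≤ 2 ^ j * d * I j x y := fun x => hIII j x y y₀ hc
        calc ∫ x, ‖K j x y - K j x y₀‖ ∂μ
            ≤ ∫ x, 2 ^ j * d * I j x y ∂μ := by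
              apply integral_mono ((hKint j y).sub (hKint j y₀)).norm
                ((hIint j y).const_mul _) hpt
          _ = 2 ^ j * d * ∫ x, I j x y ∂μ := integral_const_mul _ _
          _ ≤ 2 ^ j * d * C₃ := by
              apply mul_le_mul_of_nonneg_left (hIbd j y) (by positivity)
      · rw [hm]; simp only [if_neg hc]
        calc ∫ x, ‖K j x y - K j x y₀‖ ∂μ
            ≤ ∫ x, (‖K j x y‖ + ‖K j x y₀‖) ∂μ := by
              apply integral_mono ((hKint j y).sub (hKint j y₀)).norm
                ((hKint j y).norm.add (hKint j y₀).norm)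
              intro x; exact norm_sub_le _ _
          _ = (∫ x, ‖K j x y‖ ∂μ) + ∫ x, ‖K j x y₀‖ ∂μ :=
              integral_add (hKint j y).norm (hKint j y₀).norm
          _ ≤ C₂ + C₂ := add_le_add (hKbd j y) (hKbd j y₀)
          _ = 2 * C₂ := by ring
    -- sum of the m j bounds
    have hmsum : ∑ j ∈ Finset.range N, m j ≤
        2 * (C₁ * C₃) / (C₁ / M) + 2 * C₂ * (max 0 (Real.logb 2 (C₁ / M)) + 1) := by
      have hkey : 2 * (C₁ * C₃) / (C₁ / M) = 2 * M * C₃ := by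
        field_simp
      rw [hkey]
      set s := (Finset.range N).filter (fun j => d ≤ M * ((2:ℝ) ^ j)⁻¹) with hs
      set t := (Finset.range N).filter (fun j => ¬ d ≤ M * ((2:ℝ) ^ j)⁻¹) with ht
      have hsplit : ∑ j ∈ Finset.range N, m j = ∑ j ∈ s, m j + ∑ j ∈ t, m j :=
        (Finset.sum_filter_add_sum_filter_not _ _ _).symm
      have hsv : ∑ j ∈ s, m j ≤ 2 * M * C₃ := by
        have h1 : ∀ j ∈ s, m j = 2 ^ j * d * C₃ := by
          intro j hj
          rw [hm]; simp only [if_pos (Finset.mem_filter.mp hj).2]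
        rw [Finset.sum_congr rfl h1]
        rcases Finset.eq_empty_or_nonempty s with he | hne
        · rw [he, Finset.sum_empty]; positivity
        · set a := s.max' hne with ha
          have hasmem := s.max'_mem hne
          have haup : (2:ℝ) ^ a ≤ M / d := by
            have h2 : (0:ℝ) < 2 ^ a := by positivity
            have h3 : d ≤ M * ((2:ℝ) ^ a)⁻¹ := (Finset.mem_filter.mp hasmem).2
            refine (le_div_iff₀ hdpos).mpr ?_
            nlinarith [mul_le_mul_of_nonneg_left h3 h2.le,
              mul_inv_cancel₀ (ne_of_gt h2)]
          have hsub : s ⊆ Finset.range (a + 1) := by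
            intro j hj
            rw [Finset.mem_range, Nat.lt_succ_iff]
            exact s.le_max' j hj
          calc ∑ j ∈ s, (2:ℝ) ^ j * d * C₃
              ≤ ∑ j ∈ Finset.range (a + 1), (2:ℝ) ^ j * d * C₃ := by
                apply Finset.sum_le_sum_of_subset_of_nonneg hsub
                intro j _ _; positivity
            _ = (∑ j ∈ Finset.range (a + 1), (2:ℝ) ^ j) * (d * C₃) := by
                rw [Finset.sum_mul]; apply Finset.sum_congr rfl; intro j _; ring
            _ ≤ 2 ^ (a + 1) * (d * C₃) := by
                apply mul_le_mul_of_nonneg_right _ (by positivity)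
                have hgs := geom_sum_eq (show (2:ℝ) ≠ 1 by norm_num) (a+1)
                rw [hgs]
                have : (0:ℝ) < 2 ^ (a+1) := by positivity
                norm_num
            _ ≤ 2 * M * C₃ := by
                have : (2:ℝ) ^ (a+1) = 2 * 2 ^ a := by ring
                rw [this]
                have h3 : (2:ℝ) * 2 ^ a ≤ 2 * (M / d) := by linarith
                have h4 : 2 * (M / d) * (d * C₃) = 2 * M * C₃ := by
                  field_simp
                nlinarith [mul_le_mul_of_nonneg_right h3 (show (0:ℝ) ≤ d * C₃ by positivity)]
      have htv : ∑ j ∈ t, m j ≤ 2 * C₂ * (max 0 (Real.logb 2 (C₁ / M)) + 1) := by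
        have h1 : ∀ j ∈ t, m j = 2 * C₂ := by
          intro j hj
          rw [hm]; simp only [if_neg (Finset.mem_filter.mp hj).2]
        rw [Finset.sum_congr rfl h1, Finset.sum_const, nsmul_eq_mul]
        rcases Finset.eq_empty_or_nonempty t with he | hne
        · rw [he]; simp only [Finset.card_empty, Nat.cast_zero, zero_mul]
          have h2 : (0:ℝ) ≤ max 0 (Real.logb 2 (C₁ / M)) + 1 := by
            have := le_max_left (0:ℝ) (Real.logb 2 (C₁ / M)); linarith
          positivity
        · set a := t.min' hne with ha
          set b := t.max' hne with hb
          have hab : a ≤ b := t.min'_le b (t.max'_mem hne)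
          have hamem := t.min'_mem hne
          have hbmem := t.max'_mem hne
          have halow : M / d < (2:ℝ) ^ a := by
            have h2 : ¬ d ≤ M * ((2:ℝ) ^ a)⁻¹ := (Finset.mem_filter.mp hamem).2
            push_neg at h2
            have h3 : (0:ℝ) < 2 ^ a := by positivity
            refine (div_lt_iff₀ hdpos).mpr ?_
            nlinarith [mul_lt_mul_of_pos_left h2 h3,
              mul_inv_cancel₀ (ne_of_gt h3)]
          have hbup : (2:ℝ) ^ b ≤ C₁ / d :=
            hNmin b (Finset.mem_range.mp (Finset.mem_filter.mp hbmem).1)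
          -- card bound
          have hcard : t.card ≤ b - a + 1 := by
            have hsub : t ⊆ Finset.Icc a b := by
              intro j hj
              rw [Finset.mem_Icc]
              exact ⟨t.min'_le j hj, t.le_max' j hj⟩
            calc t.card ≤ (Finset.Icc a b).card := Finset.card_le_card hsub
              _ = b - a + 1 := by rw [Nat.card_Icc]; omega
          have hpow : (2:ℝ) ^ (b - a) < C₁ / M := by
            have h2a : (0:ℝ) < 2 ^ a := by positivity
            have heq : (2:ℝ) ^ b = 2 ^ (b - a) * 2 ^ a := by
              rw [← pow_add]; congr 1; omega
            have h5 : (2:ℝ) ^ (b - a) * (M / d) < 2 ^ (b-a) * 2 ^ a := by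
              apply mul_lt_mul_of_pos_left halow (by positivity)
            rw [← heq] at h5
            have h6 : (2:ℝ) ^ (b - a) * (M / d) < C₁ / d := lt_of_lt_of_le h5 hbup
            have h7 : (2:ℝ) ^ (b - a) * M < C₁ := by
              have h8 := mul_lt_mul_of_pos_right h6 hdpos
              have h9 : (2:ℝ) ^ (b - a) * (M / d) * d = 2 ^ (b - a) * M := by
                field_simp
              have h10 : C₁ / d * d = C₁ := div_mul_cancel₀ _ (ne_of_gt hdpos)
              rw [h9, h10] at h8
              exact h8
            exact (lt_div_iff₀ hM).mpr h7
          have hlogb : ((b - a : ℕ) : ℝ) ≤ Real.logb 2 (C₁ / M) := by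
            have h8 : Real.logb 2 ((2:ℝ) ^ (b - a)) ≤ Real.logb 2 (C₁ / M) :=
              Real.logb_le_logb_of_le one_lt_two (by positivity) hpow.le
            rwa [Real.logb_pow, Real.logb_self_eq_one one_lt_two, mul_one] at h8
          have hcardR : (t.card : ℝ) ≤ max 0 (Real.logb 2 (C₁ / M)) + 1 := by
            have h9 : (t.card : ℝ) ≤ ((b - a : ℕ) : ℝ) + 1 := by
              exact_mod_cast hcard
            have h10 : ((b - a : ℕ) : ℝ) ≤ max 0 (Real.logb 2 (C₁ / M)) :=
              le_trans hlogb (le_max_right _ _)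
            linarith
          calc (t.card : ℝ) * (2 * C₂) ≤ (max 0 (Real.logb 2 (C₁ / M)) + 1) * (2 * C₂) := by
                apply mul_le_mul_of_nonneg_right hcardR (by positivity)
            _ = 2 * C₂ * (max 0 (Real.logb 2 (C₁ / M)) + 1) := by ring
      rw [hsplit]
      linarith
    -- put everything together
    calc ∫ x in S, ‖∑' j, α j * (K j x y - K j x y₀)‖ ∂μ
        = ∫ x in S, ‖G x‖ ∂μ := by
          apply setIntegral_congr_fun hSmeas
          intro x hx
          show ‖∑' j, α j * (K j x y - K j x y₀)‖ = ‖G x‖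
          rw [htsum x hx]
      _ ≤ ∫ x, ‖G x‖ ∂μ := by
          apply setIntegral_le_integral hGinteg.norm
          filter_upwards with x using norm_nonneg _
      _ ≤ ∫ x, ∑ j ∈ Finset.range N, ‖g j x‖ ∂μ := by
          apply integral_mono hGinteg.norm
            (integrable_finset_sum _ (fun j _ => (hginteg j).norm))
          intro x
          exact norm_sum_le _ _
      _ = ∑ j ∈ Finset.range N, ∫ x, ‖g j x‖ ∂μ :=
          integral_finset_sum _ (fun j _ => (hginteg j).norm)
      _ ≤ ∑ j ∈ Finset.range N, B * m j := by
          apply Finset.sum_le_sum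
          intro j _
          have h1 : ∀ x, ‖g j x‖ = ‖α j‖ * ‖K j x y - K j x y₀‖ := by
            intro x; rw [hg]; simp [norm_mul]
          calc ∫ x, ‖g j x‖ ∂μ = ‖α j‖ * ∫ x, ‖K j x y - K j x y₀‖ ∂μ := by
                simp_rw [h1]; exact integral_const_mul _ _
            _ ≤ B * m j := by
                have h2 : (0:ℝ) ≤ ∫ x, ‖K j x y - K j x y₀‖ ∂μ :=
                  integral_nonneg (fun x => norm_nonneg _)
                have h3 : (0:ℝ) ≤ m j := le_trans h2 (hDj j)
                nlinarith [hDj j, hα j, norm_nonneg (α j)]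
      _ = B * ∑ j ∈ Finset.range N, m j := by rw [Finset.mul_sum]
      _ ≤ B * (2 * (C₁ * C₃) / (C₁ / M) + 2 * C₂ * (max 0 (Real.logb 2 (C₁ / M)) + 1)) :=
          mul_le_mul_of_nonneg_left hmsum hB
      _ = (2 * (C₁ * C₃) / (C₁ / M) + 2 * C₂ * (max 0 (Real.logb 2 (C₁ / M)) + 1)) * B := by
          ring
end

section
/- Let K_j be kernels on (X,ρ,μ) such that both {K_j} and the adjoint kernels {(x,y) ↦ conj(K_j(y,x))} satisfy: (I) support in ρ(x,y) ≤ C₁2^{-j}, (II) sup_x ∫|K_j(x,y)|dμ(y) ≤ C₂, (III) Lipschitz smoothing condition with constants C₃, M, and (IV) |∫ K_j(x,y)dμ(y)| ≤ C₄2^{-j}. Then sup_x ∫_X |∫_X K_j(x,y₀) conj(K_ℓ(y,y₀)) dμ(y₀)| dμ(y) ≤ C·2^{-|j-ℓ|}, where C depends only on C₂, C₁C₃, C₂C₄ and C₁/M. -/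
open MeasureTheory

open Set
open scoped ENNReal

lemma ofReal_norm_eq_coe_nnnorm {E : Type*} [SeminormedAddGroup E] (a : E) :
    ENNReal.ofReal ‖a‖ = (‖a‖₊ : ℝ≥0∞) := ofReal_norm a

lemma ofReal_integral_norm_eq_lintegral_nnnorm {α : Type*} [MeasurableSpace α] {μ : Measure α}
    {P : Type*} [NormedAddCommGroup P] {f : α → P} (hf : Integrable f μ) :
    ENNReal.ofReal (∫ x, ‖f x‖ ∂μ) = ∫⁻ x, (‖f x‖₊ : ℝ≥0∞) ∂μ :=
  ofReal_integral_norm_eq_lintegral_enorm hf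



lemma aux_sf {X : Type} [MeasurableSpace X] {μ : Measure X} {f : X → ℝ}
    (hm : Measurable f) (hf : Integrable f μ) :
    SigmaFinite (μ.restrict {y | f y ≠ 0}) := by
  have hmeas : MeasurableSet {y | f y ≠ 0} := (hm (measurableSet_singleton 0)).compl
  refine ⟨⟨⟨fun n => {y | ((n:ℝ)+1)⁻¹ ≤ ‖f y‖} ∪ {y | f y ≠ 0}ᶜ, fun _ => trivial, ?_, ?_⟩⟩⟩
  · intro n
    rw [Measure.restrict_apply' hmeas]
    refine lt_of_le_of_lt (measure_mono ?_)
      (hf.measure_norm_ge_lt_top (ε := ((n:ℝ)+1)⁻¹) (by positivity))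
    rintro y ⟨h | h, h2⟩
    · exact h
    · exact absurd h2 (by simpa using h)
  · ext y
    simp only [mem_iUnion, mem_union, mem_setOf_eq, mem_compl_iff, mem_univ, iff_true]
    by_cases h : f y = 0
    · exact ⟨0, Or.inr (by simp [h])⟩
    · obtain ⟨n, hn⟩ := exists_nat_gt ‖f y‖⁻¹
      have h0 : 0 < ‖f y‖ := by simpa using h
      refine ⟨n, Or.inl ?_⟩
      rw [inv_le_comm₀ (by positivity) h0] at *
      · exact le_of_lt (lt_of_lt_of_le hn (by linarith))

lemma aux_carrier {X : Type} [MeasurableSpace X] {μ : Measure X} {f : X → ℝ}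
    (hf : Integrable f μ) :
    ∃ T : Set X, MeasurableSet T ∧ SigmaFinite (μ.restrict T) ∧
      ∀ᵐ y ∂μ, y ∉ T → f y = 0 := by
  set g := hf.1.mk f with hg
  refine ⟨{y | g y ≠ 0}, (hf.1.stronglyMeasurable_mk.measurable (measurableSet_singleton 0)).compl,
    aux_sf hf.1.stronglyMeasurable_mk.measurable (hf.congr hf.1.ae_eq_mk), ?_⟩
  filter_upwards [hf.1.ae_eq_mk] with y hy hyT
  simp only [mem_setOf_eq, not_not] at hyT
  rw [hy]; exact hyT

lemma core1 {X : Type} [MeasurableSpace X] (μ : Measure X) (A : X → ℂ) (B : X → X → ℂ) (x : X) {CA CW CIV CB : ℝ}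
    (hCA : 0 ≤ CA) (hCW : 0 ≤ CW) (hCIV : 0 ≤ CIV) (hCB : 0 ≤ CB)
    (hBmeas : Measurable (Function.uncurry B))
    (hAmeas : Measurable A) (hAint : Integrable A μ)
    (hAnorm : ∫ y₀, ‖A y₀‖ ∂μ ≤ CA)
    (hcancel : ‖∫ y₀, A y₀ ∂μ‖ ≤ CIV)
    (hBx : ∫⁻ y, (‖B y x‖₊ : ℝ≥0∞) ∂μ ≤ ENNReal.ofReal CB)
    (hW : ∀ y₀, A y₀ ≠ 0 → ∫⁻ y, (‖B y y₀ - B y x‖₊ : ℝ≥0∞) ∂μ ≤ ENNReal.ofReal CW) :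
    ∫ y, ‖∫ y₀, A y₀ * (starRingEnd ℂ) (B y y₀) ∂μ‖ ∂μ ≤ CA * CW + CIV * CB := by
  set Q : X → ℂ := fun y => ∫ y₀, A y₀ * (starRingEnd ℂ) (B y y₀) ∂μ with hQdef
  by_cases hInt : Integrable (fun y => ‖Q y‖) μ
  swap
  · rw [integral_undef hInt]; positivity
  obtain ⟨T, hTm, hTsf, hTae⟩ := aux_carrier hInt
  haveI := hTsf
  set S : Set X := {y₀ | ‖A y₀‖ ≠ 0} with hSdef
  have hSm : MeasurableSet S := (hAmeas.norm (measurableSet_singleton 0)).compl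
  haveI : SigmaFinite (μ.restrict S) := aux_sf hAmeas.norm hAint.norm
  set G₁ : X → ℝ≥0∞ := fun y => ∫⁻ y₀ in S, (‖A y₀‖₊ : ℝ≥0∞) * (‖B y y₀ - B y x‖₊ : ℝ≥0∞) ∂μ
    with hG₁def
  set G₂ : X → ℝ≥0∞ := fun y => ENNReal.ofReal CIV * (‖B y x‖₊ : ℝ≥0∞) with hG₂def
  -- pointwise bound
  have key : ∀ y, (‖Q y‖₊ : ℝ≥0∞) ≤ G₁ y + G₂ y := by
    intro y
    by_cases hfy : Integrable (fun y₀ => A y₀ * (starRingEnd ℂ) (B y y₀)) μ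
    · have hf2 : Integrable (fun y₀ => A y₀ * (starRingEnd ℂ) (B y x)) μ := hAint.mul_const _
      have hf1 : Integrable
          (fun y₀ => A y₀ * ((starRingEnd ℂ) (B y y₀) - (starRingEnd ℂ) (B y x))) μ := by
        have he : (fun y₀ => A y₀ * ((starRingEnd ℂ) (B y y₀) - (starRingEnd ℂ) (B y x)))
            = fun y₀ => A y₀ * (starRingEnd ℂ) (B y y₀) - A y₀ * (starRingEnd ℂ) (B y x) := by
          funext y₀; ring
        rw [he]; exact hfy.sub hf2
      have hsplit : Q y = (∫ y₀, A y₀ * ((starRingEnd ℂ) (B y y₀) - (starRingEnd ℂ) (B y x)) ∂μ)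
          + ∫ y₀, A y₀ * (starRingEnd ℂ) (B y x) ∂μ := by
        rw [← integral_add hf1 hf2]
        simp only [hQdef]
        congr 1; funext y₀; ring
      have t1 : (‖∫ y₀, A y₀ * ((starRingEnd ℂ) (B y y₀) - (starRingEnd ℂ) (B y x)) ∂μ‖₊ : ℝ≥0∞)
          ≤ G₁ y := by
        refine le_trans (enorm_integral_le_lintegral_enorm _) ?_
        have he : ∀ y₀, (‖A y₀ * ((starRingEnd ℂ) (B y y₀) - (starRingEnd ℂ) (B y x))‖₊ : ℝ≥0∞)
            = S.indicator (fun y₀ => (‖A y₀‖₊ : ℝ≥0∞) * (‖B y y₀ - B y x‖₊ : ℝ≥0∞)) y₀ := by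
          intro y₀
          by_cases hy₀ : y₀ ∈ S
          · rw [indicator_of_mem hy₀, ← map_sub, nnnorm_mul, ENNReal.coe_mul, RCLike.nnnorm_conj]
          · have : A y₀ = 0 := by
              have := hy₀; simp only [hSdef, mem_setOf_eq, not_not, norm_eq_zero] at this
              exact this
            rw [indicator_of_notMem hy₀, this]
            simp
        simp_rw [enorm_eq_nnnorm, he]
        rw [lintegral_indicator hSm]
      have t2 : (‖∫ y₀, A y₀ * (starRingEnd ℂ) (B y x) ∂μ‖₊ : ℝ≥0∞) ≤ G₂ y := by
        rw [integral_mul_const]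
        rw [nnnorm_mul, ENNReal.coe_mul, RCLike.nnnorm_conj]
        refine mul_le_mul_left ?_ _
        rw [← ofReal_norm_eq_coe_nnnorm]
        exact ENNReal.ofReal_le_ofReal hcancel
      calc (‖Q y‖₊ : ℝ≥0∞) ≤ _ + _ := by rw [hsplit]; exact_mod_cast nnnorm_add_le _ _
        _ ≤ G₁ y + G₂ y := add_le_add t1 t2
    · have : Q y = 0 := integral_undef hfy
      simp [this]
  have hmeasH : Measurable (Function.uncurry
      fun y y₀ => (‖A y₀‖₊ : ℝ≥0∞) * (‖B y y₀ - B y x‖₊ : ℝ≥0∞)) := by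
    have h1 : Measurable fun p : X × X => B p.1 p.2 - B p.1 x :=
      hBmeas.sub (hBmeas.comp (measurable_fst.prodMk measurable_const))
    exact ((hAmeas.comp measurable_snd).enorm).mul h1.enorm
  have hG₁meas : Measurable G₁ := Measurable.lintegral_prod_right hmeasH
  have main2 : ∫⁻ y in T, (‖Q y‖₊ : ℝ≥0∞) ∂μ ≤ ENNReal.ofReal (CA * CW + CIV * CB) := by
    calc ∫⁻ y in T, (‖Q y‖₊ : ℝ≥0∞) ∂μ ≤ ∫⁻ y in T, (G₁ y + G₂ y) ∂μ :=
          lintegral_mono fun y => key y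
      _ = (∫⁻ y in T, G₁ y ∂μ) + ∫⁻ y in T, G₂ y ∂μ := lintegral_add_left hG₁meas _
      _ ≤ ENNReal.ofReal CA * ENNReal.ofReal CW + ENNReal.ofReal CIV * ENNReal.ofReal CB := by
          gcongr
          · calc ∫⁻ y in T, G₁ y ∂μ
                = ∫⁻ y₀ in S, ∫⁻ y in T, (‖A y₀‖₊ : ℝ≥0∞) * (‖B y y₀ - B y x‖₊ : ℝ≥0∞) ∂μ ∂μ :=
                  lintegral_lintegral_swap hmeasH.aemeasurable
              _ ≤ ∫⁻ y₀ in S, (‖A y₀‖₊ : ℝ≥0∞) * ENNReal.ofReal CW ∂μ := by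
                  refine setLIntegral_mono' hSm fun y₀ hy₀ => ?_
                  rw [lintegral_const_mul' _ _ ENNReal.coe_ne_top]
                  refine mul_le_mul_right ?_ _
                  refine le_trans (lintegral_mono' Measure.restrict_le_self le_rfl)
                    (hW y₀ (norm_ne_zero_iff.mp hy₀))
              _ = (∫⁻ y₀ in S, (‖A y₀‖₊ : ℝ≥0∞) ∂μ) * ENNReal.ofReal CW :=
                  lintegral_mul_const' _ _ ENNReal.ofReal_ne_top
              _ ≤ (∫⁻ y₀, (‖A y₀‖₊ : ℝ≥0∞) ∂μ) * ENNReal.ofReal CW :=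
                  mul_le_mul_left (setLIntegral_le_lintegral _ _) _
              _ ≤ ENNReal.ofReal CA * ENNReal.ofReal CW := by
                  refine mul_le_mul_left ?_ _
                  rw [← ofReal_integral_norm_eq_lintegral_nnnorm hAint]
                  exact ENNReal.ofReal_le_ofReal hAnorm
          · calc ∫⁻ y in T, G₂ y ∂μ ≤ ∫⁻ y, G₂ y ∂μ :=
                  lintegral_mono' Measure.restrict_le_self le_rfl
              _ = ENNReal.ofReal CIV * ∫⁻ y, (‖B y x‖₊ : ℝ≥0∞) ∂μ :=
                  lintegral_const_mul' _ _ ENNReal.ofReal_ne_top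
              _ ≤ ENNReal.ofReal CIV * ENNReal.ofReal CB := mul_le_mul_right hBx _
      _ = ENNReal.ofReal (CA * CW + CIV * CB) := by
          rw [← ENNReal.ofReal_mul hCA, ← ENNReal.ofReal_mul hCIV,
            ← ENNReal.ofReal_add (by positivity) (by positivity)]
  have hQT : ∫⁻ y, (‖Q y‖₊ : ℝ≥0∞) ∂μ = ∫⁻ y in T, (‖Q y‖₊ : ℝ≥0∞) ∂μ := by
    rw [← lintegral_indicator hTm]
    refine lintegral_congr_ae ?_
    filter_upwards [hTae] with y hy
    by_cases h : y ∈ T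
    · rw [indicator_of_mem h]
    · rw [indicator_of_notMem h]
      have : Q y = 0 := norm_eq_zero.mp (hy h)
      simp [this]
  rw [integral_eq_lintegral_of_nonneg_ae (Filter.Eventually.of_forall fun y => norm_nonneg _)
    hInt.aestronglyMeasurable]
  simp_rw [ofReal_norm_eq_coe_nnnorm]
  rw [hQT]
  exact ENNReal.toReal_le_of_le_ofReal (by positivity) main2

lemma core2 {X : Type} [MeasurableSpace X] (μ : Measure X) (A : X → ℂ) (B : X → X → ℂ)
    (J : X → ℝ) {CA CJ CIV CB : ℝ}
    (hCA : 0 ≤ CA) (hCJ : 0 ≤ CJ) (hCIV : 0 ≤ CIV) (hCB : 0 ≤ CB)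
    (hBmeas : Measurable (Function.uncurry B))
    (hAmeas : Measurable A) (hAint : Integrable A μ)
    (hAnorm : ∫ y, ‖A y‖ ∂μ ≤ CA)
    (hBint : ∀ y, Integrable (fun y₀ => B y y₀) μ)
    (hBcancel : ∀ y, ‖∫ y₀, B y y₀ ∂μ‖ ≤ CIV)
    (hB2 : ∀ y₀, ∫⁻ y, (‖B y y₀‖₊ : ℝ≥0∞) ∂μ ≤ ENNReal.ofReal CB)
    (hJint : Integrable J μ) (hJnn : ∀ y₀, 0 ≤ J y₀) (hJnorm : ∫ y₀, J y₀ ∂μ ≤ CJ)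
    (hsmooth : ∀ y y₀, B y y₀ ≠ 0 → ‖A y₀ - A y‖ ≤ J y₀) :
    ∫ y, ‖∫ y₀, A y₀ * (starRingEnd ℂ) (B y y₀) ∂μ‖ ∂μ ≤ CJ * CB + CA * CIV := by
  set Q : X → ℂ := fun y => ∫ y₀, A y₀ * (starRingEnd ℂ) (B y y₀) ∂μ with hQdef
  by_cases hInt : Integrable (fun y => ‖Q y‖) μ
  swap
  · rw [integral_undef hInt]; positivity
  obtain ⟨T, hTm, hTsf, hTae⟩ := aux_carrier hInt
  haveI := hTsf
  set Jt : X → ℝ := hJint.1.mk J with hJtdef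
  have hJtmeas : Measurable Jt := hJint.1.stronglyMeasurable_mk.measurable
  have hJae : J =ᵐ[μ] Jt := hJint.1.ae_eq_mk
  have hJtint : Integrable Jt μ := hJint.congr hJae
  have hJtnn : 0 ≤ᵐ[μ] Jt := hJae.mono fun a h => h ▸ hJnn a
  set S : Set X := {y₀ | Jt y₀ ≠ 0} with hSdef
  have hSm : MeasurableSet S := (hJtmeas (measurableSet_singleton 0)).compl
  haveI : SigmaFinite (μ.restrict S) := aux_sf hJtmeas hJtint
  set G₁ : X → ℝ≥0∞ :=
    fun y => ∫⁻ y₀ in S, ENNReal.ofReal (Jt y₀) * (‖B y y₀‖₊ : ℝ≥0∞) ∂μ with hG₁def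
  set G₂ : X → ℝ≥0∞ := fun y => (‖A y‖₊ : ℝ≥0∞) * ENNReal.ofReal CIV with hG₂def
  have key : ∀ y, (‖Q y‖₊ : ℝ≥0∞) ≤ G₁ y + G₂ y := by
    intro y
    by_cases hfy : Integrable (fun y₀ => A y₀ * (starRingEnd ℂ) (B y y₀)) μ
    · have hconjint : Integrable (fun y₀ => (starRingEnd ℂ) (B y y₀)) μ := by
        refine (hBint y).mono
          (RCLike.continuous_conj.comp_aestronglyMeasurable (hBint y).1) ?_
        exact Filter.Eventually.of_forall fun y₀ => by rw [RCLike.norm_conj]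
      have hf2 : Integrable (fun y₀ => A y * (starRingEnd ℂ) (B y y₀)) μ :=
        hconjint.const_mul (A y)
      have hf1 : Integrable (fun y₀ => (A y₀ - A y) * (starRingEnd ℂ) (B y y₀)) μ := by
        have he : (fun y₀ => (A y₀ - A y) * (starRingEnd ℂ) (B y y₀))
            = fun y₀ => A y₀ * (starRingEnd ℂ) (B y y₀) - A y * (starRingEnd ℂ) (B y y₀) := by
          funext y₀; ring
        rw [he]; exact hfy.sub hf2
      have hsplit : Q y = (∫ y₀, (A y₀ - A y) * (starRingEnd ℂ) (B y y₀) ∂μ)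
          + ∫ y₀, A y * (starRingEnd ℂ) (B y y₀) ∂μ := by
        rw [← integral_add hf1 hf2]
        simp only [hQdef]
        congr 1; funext y₀; ring
      have t1 : (‖∫ y₀, (A y₀ - A y) * (starRingEnd ℂ) (B y y₀) ∂μ‖₊ : ℝ≥0∞) ≤ G₁ y := by
        refine le_trans (enorm_integral_le_lintegral_enorm _) ?_
        have step1 : ∫⁻ y₀, (‖(A y₀ - A y) * (starRingEnd ℂ) (B y y₀)‖₊ : ℝ≥0∞) ∂μ
            ≤ ∫⁻ y₀, ENNReal.ofReal (J y₀) * (‖B y y₀‖₊ : ℝ≥0∞) ∂μ := by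
          refine lintegral_mono fun y₀ => ?_
          rw [nnnorm_mul, ENNReal.coe_mul, RCLike.nnnorm_conj]
          by_cases hB0 : B y y₀ = 0
          · simp [hB0]
          · refine mul_le_mul_left ?_ _
            rw [← ofReal_norm_eq_coe_nnnorm]
            exact ENNReal.ofReal_le_ofReal (hsmooth y y₀ hB0)
        refine le_trans step1 ?_
        have step2 : ∫⁻ y₀, ENNReal.ofReal (J y₀) * (‖B y y₀‖₊ : ℝ≥0∞) ∂μ
            = ∫⁻ y₀, ENNReal.ofReal (Jt y₀) * (‖B y y₀‖₊ : ℝ≥0∞) ∂μ :=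
          lintegral_congr_ae (hJae.mono fun y₀ h => by dsimp only; rw [h])
        rw [step2]
        have step3 : ∀ y₀, ENNReal.ofReal (Jt y₀) * (‖B y y₀‖₊ : ℝ≥0∞)
            = S.indicator (fun y₀ => ENNReal.ofReal (Jt y₀) * (‖B y y₀‖₊ : ℝ≥0∞)) y₀ := by
          intro y₀
          by_cases hy₀ : y₀ ∈ S
          · rw [indicator_of_mem hy₀]
          · have : Jt y₀ = 0 := by by_contra hne; exact hy₀ hne
            rw [indicator_of_notMem hy₀, this, ENNReal.ofReal_zero, zero_mul]
        rw [lintegral_congr step3, lintegral_indicator hSm]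
      have t2 : (‖∫ y₀, A y * (starRingEnd ℂ) (B y y₀) ∂μ‖₊ : ℝ≥0∞) ≤ G₂ y := by
        rw [integral_const_mul, integral_conj, nnnorm_mul, ENNReal.coe_mul, RCLike.nnnorm_conj]
        refine mul_le_mul_right ?_ _
        rw [← ofReal_norm_eq_coe_nnnorm]
        exact ENNReal.ofReal_le_ofReal (hBcancel y)
      calc (‖Q y‖₊ : ℝ≥0∞) ≤ _ + _ := by rw [hsplit]; exact_mod_cast nnnorm_add_le _ _
        _ ≤ G₁ y + G₂ y := add_le_add t1 t2
    · have : Q y = 0 := integral_undef hfy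
      simp [this]
  have hmeasH : Measurable (Function.uncurry
      fun y y₀ => ENNReal.ofReal (Jt y₀) * (‖B y y₀‖₊ : ℝ≥0∞)) := by
    exact (ENNReal.measurable_ofReal.comp (hJtmeas.comp measurable_snd)).mul hBmeas.enorm
  have hG₁meas : Measurable G₁ := Measurable.lintegral_prod_right hmeasH
  have main2 : ∫⁻ y in T, (‖Q y‖₊ : ℝ≥0∞) ∂μ ≤ ENNReal.ofReal (CJ * CB + CA * CIV) := by
    calc ∫⁻ y in T, (‖Q y‖₊ : ℝ≥0∞) ∂μ ≤ ∫⁻ y in T, (G₁ y + G₂ y) ∂μ :=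
          lintegral_mono fun y => key y
      _ = (∫⁻ y in T, G₁ y ∂μ) + ∫⁻ y in T, G₂ y ∂μ := lintegral_add_left hG₁meas _
      _ ≤ ENNReal.ofReal CJ * ENNReal.ofReal CB + ENNReal.ofReal CA * ENNReal.ofReal CIV := by
          gcongr
          · calc ∫⁻ y in T, G₁ y ∂μ
                = ∫⁻ y₀ in S, ∫⁻ y in T, ENNReal.ofReal (Jt y₀) * (‖B y y₀‖₊ : ℝ≥0∞) ∂μ ∂μ :=
                  lintegral_lintegral_swap hmeasH.aemeasurable
              _ ≤ ∫⁻ y₀ in S, ENNReal.ofReal (Jt y₀) * ENNReal.ofReal CB ∂μ := by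
                  refine setLIntegral_mono' hSm fun y₀ _ => ?_
                  rw [lintegral_const_mul' _ _ ENNReal.ofReal_ne_top]
                  refine mul_le_mul_right ?_ _
                  exact le_trans (lintegral_mono' Measure.restrict_le_self le_rfl) (hB2 y₀)
              _ = (∫⁻ y₀ in S, ENNReal.ofReal (Jt y₀) ∂μ) * ENNReal.ofReal CB :=
                  lintegral_mul_const' _ _ ENNReal.ofReal_ne_top
              _ ≤ (∫⁻ y₀, ENNReal.ofReal (Jt y₀) ∂μ) * ENNReal.ofReal CB :=
                  mul_le_mul_left (setLIntegral_le_lintegral _ _) _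
              _ ≤ ENNReal.ofReal CJ * ENNReal.ofReal CB := by
                  refine mul_le_mul_left ?_ _
                  rw [← ofReal_integral_eq_lintegral_ofReal hJtint hJtnn]
                  refine ENNReal.ofReal_le_ofReal ?_
                  rw [← integral_congr_ae hJae]
                  exact hJnorm
          · calc ∫⁻ y in T, G₂ y ∂μ ≤ ∫⁻ y, G₂ y ∂μ :=
                  lintegral_mono' Measure.restrict_le_self le_rfl
              _ = (∫⁻ y, (‖A y‖₊ : ℝ≥0∞) ∂μ) * ENNReal.ofReal CIV :=
                  lintegral_mul_const' _ _ ENNReal.ofReal_ne_top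
              _ ≤ ENNReal.ofReal CA * ENNReal.ofReal CIV := by
                  refine mul_le_mul_left ?_ _
                  rw [← ofReal_integral_norm_eq_lintegral_nnnorm hAint]
                  exact ENNReal.ofReal_le_ofReal hAnorm
      _ = ENNReal.ofReal (CJ * CB + CA * CIV) := by
          rw [← ENNReal.ofReal_mul hCJ, ← ENNReal.ofReal_mul hCA,
            ← ENNReal.ofReal_add (by positivity) (by positivity)]
  have hQT : ∫⁻ y, (‖Q y‖₊ : ℝ≥0∞) ∂μ = ∫⁻ y in T, (‖Q y‖₊ : ℝ≥0∞) ∂μ := by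
    rw [← lintegral_indicator hTm]
    refine lintegral_congr_ae ?_
    filter_upwards [hTae] with y hy
    by_cases h : y ∈ T
    · rw [indicator_of_mem h]
    · rw [indicator_of_notMem h]
      have : Q y = 0 := norm_eq_zero.mp (hy h)
      simp [this]
  rw [integral_eq_lintegral_of_nonneg_ae (Filter.Eventually.of_forall fun y => norm_nonneg _)
    hInt.aestronglyMeasurable]
  simp_rw [ofReal_norm_eq_coe_nnnorm]
  rw [hQT]
  exact ENNReal.toReal_le_of_le_ofReal (by positivity) main2


set_option maxHeartbeats 2000000 in
theorem stmt10 : ∃ F : ℝ → ℝ → ℝ → ℝ → ℝ,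
    ∀ (X : Type) [MeasurableSpace X], ∀ (μ : Measure X)
      (ρ : X → X → ℝ) (Cρ C₁ C₂ C₃ C₄ M : ℝ)
      (K : ℕ → X → X → ℂ) (I I' : ℕ → X → X → ℝ),
      (∀ x y, 0 ≤ ρ x y) → (∀ x y, ρ x y = ρ y x) →
      1 ≤ Cρ → (∀ x y y₀, ρ x y ≤ Cρ * (ρ x y₀ + ρ y y₀)) →
      Measurable (Function.uncurry ρ) →
      0 < C₁ → 0 < C₂ → 0 < C₃ → 0 < C₄ → 0 < M →
      (∀ j, Measurable (Function.uncurry (K j))) →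
      (∀ j x, Integrable (fun y => K j x y) μ) →
      (∀ j y, Integrable (fun x => K j x y) μ) →
      -- (I): support condition (the same for K and its adjoint)
      (∀ j x y, C₁ * ((2:ℝ) ^ j)⁻¹ < ρ x y → K j x y = 0) →
      -- (II): mass condition for K and its adjoint
      (∀ j x, ∫ y, ‖K j x y‖ ∂μ ≤ C₂) →
      (∀ j y, ∫ x, ‖K j x y‖ ∂μ ≤ C₂) →
      -- (III): Lipschitz smoothing condition for K
      (∀ j x y, 0 ≤ I j x y) →
      (∀ j x y y₀, ρ y y₀ ≤ M * ((2:ℝ) ^ j)⁻¹ →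
        ‖K j x y - K j x y₀‖ ≤ (2:ℝ) ^ j * ρ y y₀ * I j x y) →
      (∀ j x, Integrable (fun y => I j x y) μ) →
      (∀ j y, Integrable (fun x => I j x y) μ) →
      (∀ j x, ∫ y, I j x y ∂μ ≤ C₃) →
      (∀ j y, ∫ x, I j x y ∂μ ≤ C₃) →
      -- (III): Lipschitz smoothing condition for the adjoint kernels
      (∀ j x y, 0 ≤ I' j x y) →
      (∀ j x y y₀, ρ y y₀ ≤ M * ((2:ℝ) ^ j)⁻¹ →
        ‖K j y x - K j y₀ x‖ ≤ (2:ℝ) ^ j * ρ y y₀ * I' j x y) →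
      (∀ j x, Integrable (fun y => I' j x y) μ) →
      (∀ j y, Integrable (fun x => I' j x y) μ) →
      (∀ j x, ∫ y, I' j x y ∂μ ≤ C₃) →
      (∀ j y, ∫ x, I' j x y ∂μ ≤ C₃) →
      -- (IV): cancellation condition for K and its adjoint
      (∀ j x, ‖∫ y, K j x y ∂μ‖ ≤ C₄ * ((2:ℝ) ^ j)⁻¹) →
      (∀ j x, ‖∫ y, K j y x ∂μ‖ ≤ C₄ * ((2:ℝ) ^ j)⁻¹) →
      ∀ (j ℓ : ℕ) (x : X),
        ∫ y, ‖∫ y₀, K j x y₀ * (starRingEnd ℂ) (K ℓ y y₀) ∂μ‖ ∂μ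
          ≤ F C₂ (C₁ * C₃) (C₂ * C₄) (C₁ / M) * (2:ℝ) ^ (-|(j:ℝ) - (ℓ:ℝ)|) := by
  classical
  refine ⟨fun a b c d => a * b + c + 3 * (a ^ 2 * d), ?_⟩
  intro X _ μ ρ Cρ C₁ C₂ C₃ C₄ M K I I' hρnn hρsym hCρ htri hρmeas hC₁ hC₂ hC₃ hC₄ hM
    hKmeas hKint1 hKint2 hK1 hK2a hK2b hInn hK3 hIint1 hIint2 hI3a hI3b
    hI'nn hK3' hI'int1 hI'int2 hI'3a hI'3b hK4a hK4b j ℓ x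
  have h2j : (0:ℝ) < (2:ℝ) ^ j := by positivity
  have h2l : (0:ℝ) < (2:ℝ) ^ ℓ := by positivity
  have hmass2 : ∀ (jj : ℕ) (y₀ : X),
      ∫⁻ yy, (‖K jj yy y₀‖₊ : ℝ≥0∞) ∂μ ≤ ENNReal.ofReal C₂ := by
    intro jj y₀
    rw [← ofReal_integral_norm_eq_lintegral_nnnorm (hKint2 jj y₀)]
    exact ENNReal.ofReal_le_ofReal (hK2b jj y₀)
  set D := (2:ℝ) ^ (-|(j:ℝ) - (ℓ:ℝ)|) with hD
  have hDpos : 0 < D := Real.rpow_pos_of_pos two_pos _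
  -- trivial bound, valid always
  have htriv : ∫ y, ‖∫ y₀, K j x y₀ * (starRingEnd ℂ) (K ℓ y y₀) ∂μ‖ ∂μ
      ≤ C₂ * (2 * C₂) + C₂ * C₂ := by
    refine core1 μ (fun y₀ => K j x y₀) (K ℓ) x hC₂.le (by positivity) hC₂.le hC₂.le
      (hKmeas ℓ) ((hKmeas j).comp measurable_prodMk_left) (hKint1 j x) (hK2a j x)
      (le_trans (norm_integral_le_integral_norm _) (hK2a j x)) (hmass2 ℓ x) ?_
    intro y₀ _
    calc ∫⁻ y, (‖K ℓ y y₀ - K ℓ y x‖₊ : ℝ≥0∞) ∂μ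
        ≤ ∫⁻ y, ((‖K ℓ y y₀‖₊ : ℝ≥0∞) + (‖K ℓ y x‖₊ : ℝ≥0∞)) ∂μ := by
          refine lintegral_mono fun y => ?_
          rw [← ENNReal.coe_add]
          exact ENNReal.coe_le_coe.2 (nnnorm_sub_le _ _)
      _ = (∫⁻ y, (‖K ℓ y y₀‖₊ : ℝ≥0∞) ∂μ) + ∫⁻ y, (‖K ℓ y x‖₊ : ℝ≥0∞) ∂μ :=
          lintegral_add_left
            (((hKmeas ℓ).comp (measurable_id.prodMk measurable_const)).enorm) _
      _ ≤ ENNReal.ofReal C₂ + ENNReal.ofReal C₂ := add_le_add (hmass2 ℓ y₀) (hmass2 ℓ x)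
      _ = ENNReal.ofReal (2 * C₂) := by
          rw [← ENNReal.ofReal_add hC₂.le hC₂.le]; norm_num [two_mul]
  rcases le_total ℓ j with hle | hle
  · have hDval : D = (2:ℝ) ^ ℓ * ((2:ℝ) ^ j)⁻¹ := by
      rw [hD]
      have h1 : |(j:ℝ) - (ℓ:ℝ)| = (j:ℝ) - (ℓ:ℝ) :=
        abs_of_nonneg (sub_nonneg.2 (by exact_mod_cast hle))
      rw [h1, neg_sub, Real.rpow_sub two_pos, Real.rpow_natCast, Real.rpow_natCast,
        div_eq_mul_inv]
    have hone : (1:ℝ) ≤ (2:ℝ) ^ ℓ := one_le_pow₀ (by norm_num)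
    by_cases hscale : C₁ * ((2:ℝ) ^ j)⁻¹ ≤ M * ((2:ℝ) ^ ℓ)⁻¹
    · -- smooth case
      have hW : ∀ y₀, K j x y₀ ≠ 0 → ∫⁻ y, (‖K ℓ y y₀ - K ℓ y x‖₊ : ℝ≥0∞) ∂μ
          ≤ ENNReal.ofReal ((2:ℝ) ^ ℓ * (C₁ * ((2:ℝ) ^ j)⁻¹) * C₃) := by
        intro y₀ hy₀
        have hρle : ρ x y₀ ≤ C₁ * ((2:ℝ) ^ j)⁻¹ := by
          by_contra hgt
          exact hy₀ (hK1 j x y₀ (lt_of_not_ge hgt))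
        have hρle2 : ρ y₀ x ≤ M * ((2:ℝ) ^ ℓ)⁻¹ := by
          rw [hρsym]; exact le_trans hρle hscale
        have hpt : ∀ y, (‖K ℓ y y₀ - K ℓ y x‖₊ : ℝ≥0∞)
            ≤ ENNReal.ofReal ((2:ℝ) ^ ℓ * ρ y₀ x) * ENNReal.ofReal (I ℓ y y₀) := by
          intro y
          rw [← ENNReal.ofReal_mul (mul_nonneg h2l.le (hρnn y₀ x)), ← ofReal_norm_eq_coe_nnnorm]
          exact ENNReal.ofReal_le_ofReal (hK3 ℓ y y₀ x hρle2)
        calc ∫⁻ y, (‖K ℓ y y₀ - K ℓ y x‖₊ : ℝ≥0∞) ∂μ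
            ≤ ∫⁻ y, ENNReal.ofReal ((2:ℝ) ^ ℓ * ρ y₀ x) * ENNReal.ofReal (I ℓ y y₀) ∂μ :=
              lintegral_mono hpt
          _ = ENNReal.ofReal ((2:ℝ) ^ ℓ * ρ y₀ x) * ∫⁻ y, ENNReal.ofReal (I ℓ y y₀) ∂μ :=
              lintegral_const_mul' _ _ ENNReal.ofReal_ne_top
          _ ≤ ENNReal.ofReal ((2:ℝ) ^ ℓ * ρ y₀ x) * ENNReal.ofReal C₃ := by
              refine mul_le_mul_right ?_ _
              rw [← ofReal_integral_eq_lintegral_ofReal (hIint2 ℓ y₀)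
                (Filter.Eventually.of_forall fun yy => hInn ℓ yy y₀)]
              exact ENNReal.ofReal_le_ofReal (hI3b ℓ y₀)
          _ ≤ ENNReal.ofReal ((2:ℝ) ^ ℓ * (C₁ * ((2:ℝ) ^ j)⁻¹) * C₃) := by
              rw [← ENNReal.ofReal_mul (mul_nonneg h2l.le (hρnn y₀ x))]
              refine ENNReal.ofReal_le_ofReal ?_
              have hxx : ρ y₀ x ≤ C₁ * ((2:ℝ) ^ j)⁻¹ := by rw [hρsym]; exact hρle
              nlinarith [mul_nonneg (mul_nonneg h2l.le hC₃.le) (sub_nonneg.2 hxx)]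
      have hcore := core1 μ (fun y₀ => K j x y₀) (K ℓ) x
        (CA := C₂) (CW := (2:ℝ) ^ ℓ * (C₁ * ((2:ℝ) ^ j)⁻¹) * C₃)
        (CIV := C₄ * ((2:ℝ) ^ j)⁻¹) (CB := C₂)
        hC₂.le (by positivity) (by positivity) hC₂.le
        (hKmeas ℓ) ((hKmeas j).comp measurable_prodMk_left) (hKint1 j x) (hK2a j x)
        (hK4a j x) (hmass2 ℓ x) hW
      refine le_trans hcore ?_
      rw [hDval]
      have hinv : (0:ℝ) < ((2:ℝ) ^ j)⁻¹ := by positivity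
      have e1 : C₂ * ((2:ℝ) ^ ℓ * (C₁ * ((2:ℝ) ^ j)⁻¹) * C₃)
          = C₂ * (C₁ * C₃) * ((2:ℝ) ^ ℓ * ((2:ℝ) ^ j)⁻¹) := by ring
      have e2 : C₄ * ((2:ℝ) ^ j)⁻¹ * C₂ ≤ C₂ * C₄ * ((2:ℝ) ^ ℓ * ((2:ℝ) ^ j)⁻¹) := by
        nlinarith [mul_nonneg (mul_nonneg (mul_pos hC₂ hC₄).le hinv.le) (sub_nonneg.2 hone)]
      have e3 : (0:ℝ) ≤ 3 * (C₂ ^ 2 * (C₁ / M)) * ((2:ℝ) ^ ℓ * ((2:ℝ) ^ j)⁻¹) := by positivity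
      linarith
    · -- rough case
      refine le_trans htriv ?_
      have h' := not_le.mp hscale
      have hkey : 1 < C₁ / M * D := by
        rw [hDval, div_mul_eq_mul_div, lt_div_iff₀ hM, one_mul]
        have h3 : M * ((2:ℝ) ^ ℓ)⁻¹ * (2:ℝ) ^ ℓ = M := by
          rw [mul_assoc, inv_mul_cancel₀ (ne_of_gt h2l), mul_one]
        calc M = M * ((2:ℝ) ^ ℓ)⁻¹ * (2:ℝ) ^ ℓ := h3.symm
          _ < C₁ * ((2:ℝ) ^ j)⁻¹ * (2:ℝ) ^ ℓ := mul_lt_mul_of_pos_right h' h2l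
          _ = C₁ * ((2:ℝ) ^ ℓ * ((2:ℝ) ^ j)⁻¹) := by ring
      have t1 : (0:ℝ) ≤ C₂ * (C₁ * C₃) * D := mul_nonneg (by positivity) hDpos.le
      have t2 : (0:ℝ) ≤ C₂ * C₄ * D := mul_nonneg (by positivity) hDpos.le
      have t3 : 3 * C₂ ^ 2 < 3 * (C₂ ^ 2 * (C₁ / M)) * D := by
        calc 3 * C₂ ^ 2 = 3 * C₂ ^ 2 * 1 := by ring
          _ < 3 * C₂ ^ 2 * (C₁ / M * D) := mul_lt_mul_of_pos_left hkey (by positivity)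
          _ = 3 * (C₂ ^ 2 * (C₁ / M)) * D := by ring
      have e0 : C₂ * (2 * C₂) + C₂ * C₂ = 3 * C₂ ^ 2 := by ring
      linarith
  · have hDval : D = (2:ℝ) ^ j * ((2:ℝ) ^ ℓ)⁻¹ := by
      rw [hD]
      have h1 : |(j:ℝ) - (ℓ:ℝ)| = (ℓ:ℝ) - (j:ℝ) := by
        rw [abs_of_nonpos (sub_nonpos.2 (by exact_mod_cast hle)), neg_sub]
      rw [h1, neg_sub, Real.rpow_sub two_pos, Real.rpow_natCast, Real.rpow_natCast,
        div_eq_mul_inv]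
    have hone : (1:ℝ) ≤ (2:ℝ) ^ j := one_le_pow₀ (by norm_num)
    by_cases hscale : C₁ * ((2:ℝ) ^ ℓ)⁻¹ ≤ M * ((2:ℝ) ^ j)⁻¹
    · -- smooth case, use core2
      set c : ℝ := (2:ℝ) ^ j * (C₁ * ((2:ℝ) ^ ℓ)⁻¹) with hc
      have hcnn : 0 ≤ c := by positivity
      have hsmooth : ∀ y y₀, K ℓ y y₀ ≠ 0 → ‖K j x y₀ - K j x y‖ ≤ c * I j x y₀ := by
        intro y y₀ hy₀
        have hρ1 : ρ y y₀ ≤ C₁ * ((2:ℝ) ^ ℓ)⁻¹ := by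
          by_contra hgt
          exact hy₀ (hK1 ℓ y y₀ (lt_of_not_ge hgt))
        have hρ2 : ρ y₀ y ≤ M * ((2:ℝ) ^ j)⁻¹ := by
          rw [hρsym]; exact le_trans hρ1 hscale
        refine le_trans (hK3 j x y₀ y hρ2) ?_
        have hρ3 : ρ y₀ y ≤ C₁ * ((2:ℝ) ^ ℓ)⁻¹ := by rw [hρsym]; exact hρ1
        rw [hc]
        nlinarith [mul_nonneg (mul_nonneg h2j.le (hInn j x y₀)) (sub_nonneg.2 hρ3)]
      have hJnorm : ∫ y₀, c * I j x y₀ ∂μ ≤ c * C₃ := by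
        rw [integral_const_mul]
        exact mul_le_mul_of_nonneg_left (hI3a j x) hcnn
      have hcore := core2 μ (fun y₀ => K j x y₀) (K ℓ) (fun y₀ => c * I j x y₀)
        (CA := C₂) (CJ := c * C₃) (CIV := C₄ * ((2:ℝ) ^ ℓ)⁻¹) (CB := C₂)
        hC₂.le (by positivity) (by positivity) hC₂.le
        (hKmeas ℓ) ((hKmeas j).comp measurable_prodMk_left) (hKint1 j x) (hK2a j x)
        (fun y => hKint1 ℓ y) (fun y => hK4a ℓ y) (hmass2 ℓ)
        ((hIint1 j x).const_mul c) (fun y₀ => mul_nonneg hcnn (hInn j x y₀)) hJnorm hsmooth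
      refine le_trans hcore ?_
      rw [hDval]
      have hinv : (0:ℝ) < ((2:ℝ) ^ ℓ)⁻¹ := by positivity
      have e1 : c * C₃ * C₂ = C₂ * (C₁ * C₃) * ((2:ℝ) ^ j * ((2:ℝ) ^ ℓ)⁻¹) := by
        rw [hc]; ring
      have e2 : C₂ * (C₄ * ((2:ℝ) ^ ℓ)⁻¹) ≤ C₂ * C₄ * ((2:ℝ) ^ j * ((2:ℝ) ^ ℓ)⁻¹) := by
        nlinarith [mul_nonneg (mul_nonneg (mul_pos hC₂ hC₄).le hinv.le) (sub_nonneg.2 hone)]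
      have e3 : (0:ℝ) ≤ 3 * (C₂ ^ 2 * (C₁ / M)) * ((2:ℝ) ^ j * ((2:ℝ) ^ ℓ)⁻¹) := by positivity
      linarith
    · refine le_trans htriv ?_
      have h' := not_le.mp hscale
      have hkey : 1 < C₁ / M * D := by
        rw [hDval, div_mul_eq_mul_div, lt_div_iff₀ hM, one_mul]
        have h3 : M * ((2:ℝ) ^ j)⁻¹ * (2:ℝ) ^ j = M := by
          rw [mul_assoc, inv_mul_cancel₀ (ne_of_gt h2j), mul_one]
        calc M = M * ((2:ℝ) ^ j)⁻¹ * (2:ℝ) ^ j := h3.symm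
          _ < C₁ * ((2:ℝ) ^ ℓ)⁻¹ * (2:ℝ) ^ j := mul_lt_mul_of_pos_right h' h2j
          _ = C₁ * ((2:ℝ) ^ j * ((2:ℝ) ^ ℓ)⁻¹) := by ring
      have t1 : (0:ℝ) ≤ C₂ * (C₁ * C₃) * D := mul_nonneg (by positivity) hDpos.le
      have t2 : (0:ℝ) ≤ C₂ * C₄ * D := mul_nonneg (by positivity) hDpos.le
      have t3 : 3 * C₂ ^ 2 < 3 * (C₂ ^ 2 * (C₁ / M)) * D := by
        calc 3 * C₂ ^ 2 = 3 * C₂ ^ 2 * 1 := by ring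
          _ < 3 * C₂ ^ 2 * (C₁ / M * D) := mul_lt_mul_of_pos_left hkey (by positivity)
          _ = 3 * (C₂ ^ 2 * (C₁ / M)) * D := by ring
      have e0 : C₂ * (2 * C₂) + C₂ * C₂ = 3 * C₂ ^ 2 := by ring
      linarith
end
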